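/- Let g₁, g₂ be measurable functions on 𝕋 and τ ⊂ 𝕋 measurable with g₂ supported in τ. Define θ₁ = g₁/(|g₁|²+|g₂|²)^{1/2} and θ₂ = g₂/(|g₁|²+|g₂|²)^{1/2} on τ (assuming |g₁|²+|g₂|² > 0 a.e.), and let E₀ = {θ₁h ⊕ (−θ₂h) : h ∈ L²(τ)} ⊂ L²(τ) ⊕ L²(𝕋). Define J : L²(𝕋) → (L²(τ) ⊕ L²(𝕋)) ⊖ E₀ by Jh = conj(θ₂)·h|_τ ⊕ (conj(θ₁)·h|_τ + h|_{𝕋∖τ}). Then J is a well-defined unitary operator, J intertwines U_𝕋 with (U_τ ⊕ U_𝕋)|_{(L²(τ)⊕L²(𝕋))⊖E₀}, and L²(τ) ⊕ L²(𝕋) = J L²(𝕋) ⊕ E₀. -/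

import Mathlib

open MeasureTheory Filter Topology
open scoped InnerProductSpace

lemma l2_norm_sq' {α : Type*} [MeasurableSpace α] (ν : Measure α) (f : Lp ℂ 2 ν) :
    ‖f‖ ^ 2 = ∫ a, ‖f a‖ ^ 2 ∂ν := by
  have h1 : (‖f‖ : ℝ) ^ 2 = RCLike.re (⟪f, f⟫_ℂ) := (@inner_self_eq_norm_sq ℂ _ _ _ _ f).symm
  rw [h1, MeasureTheory.L2.inner_def, ← integral_re (L2.integrable_inner f f)]
  refine integral_congr_ae (Eventually.of_forall fun a => ?_)
  exact inner_self_eq_norm_sq (f a)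

/-- with the circle abstracted as a probability space `(Ω, μ)` and
`τ ⊆ Ω` measurable, let `g₂` be supported in `τ`, `|g₁|² + |g₂|² > 0` a.e.,
`θ₁ = g₁/(|g₁|²+|g₂|²)^{1/2}`, `θ₂ = g₂/(|g₁|²+|g₂|²)^{1/2}`, and
`E₀ = {θ₁ h ⊕ (−θ₂ h) : h ∈ L²(τ)} ⊆ L²(τ) ⊕ L²(Ω)`.  Let `u` be the
independent variable (`|u| = 1` a.e.) with multiplication operators `Uτ'`, `UT`
on `L²(τ)`, `L²(Ω)`.  Then the map
`J h = conj θ₂ · h|_τ ⊕ (conj θ₁ · h|_τ + h|_{Ω∖τ})` is a well-defined linear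
isometry of `L²(Ω)` onto the orthogonal complement of `E₀`, it intertwines
`U_Ω` with `(U_τ ⊕ U_Ω)` restricted to that complement, and
`L²(τ) ⊕ L²(Ω) = J L²(Ω) ⊕ E₀`. -/
theorem stmt_19 {Ω : Type*} [MeasurableSpace Ω] (μ : Measure Ω) [IsProbabilityMeasure μ]
    (τ : Set Ω) (hτ : MeasurableSet τ)
    (g₁ g₂ : Ω → ℂ) (hg₁m : Measurable g₁) (hg₂m : Measurable g₂)
    (hg₂supp : ∀ᵐ ζ ∂μ, ζ ∉ τ → g₂ ζ = 0)
    (hpos : ∀ᵐ ζ ∂μ, g₁ ζ ≠ 0 ∨ g₂ ζ ≠ 0)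
    (θ₁ θ₂ : Ω → ℂ)
    (hθ₁ : ∀ ζ, θ₁ ζ = g₁ ζ / (Real.sqrt (‖g₁ ζ‖ ^ 2 + ‖g₂ ζ‖ ^ 2) : ℂ))
    (hθ₂ : ∀ ζ, θ₂ ζ = g₂ ζ / (Real.sqrt (‖g₁ ζ‖ ^ 2 + ‖g₂ ζ‖ ^ 2) : ℂ))
    (E₀ : Set ((Lp ℂ 2 (μ.restrict τ)) × (Lp ℂ 2 μ)))
    (hE₀ : E₀ = {p : (Lp ℂ 2 (μ.restrict τ)) × (Lp ℂ 2 μ) | ∃ h : Ω → ℂ, MemLp h 2 (μ.restrict τ) ∧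
      (⇑p.1 =ᵐ[μ.restrict τ] fun ζ => θ₁ ζ * h ζ) ∧
      (⇑p.2 =ᵐ[μ] τ.indicator fun ζ => -(θ₂ ζ) * h ζ)})
    (u : Ω → ℂ) (hu : ∀ᵐ ζ ∂μ, ‖u ζ‖ = 1)
    (Uτ' : Lp ℂ 2 (μ.restrict τ) →L[ℂ] Lp ℂ 2 (μ.restrict τ))
    (hUτ' : ∀ h, ⇑(Uτ' h) =ᵐ[μ.restrict τ] fun ζ => u ζ * ⇑h ζ)
    (UT : Lp ℂ 2 μ →L[ℂ] Lp ℂ 2 μ)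
    (hUT : ∀ h, ⇑(UT h) =ᵐ[μ] fun ζ => u ζ * ⇑h ζ) :
    ∃ J : Lp ℂ 2 μ →ₗ[ℂ] (Lp ℂ 2 (μ.restrict τ)) × (Lp ℂ 2 μ),
      (∀ h : Lp ℂ 2 μ,
        ⇑(J h).1 =ᵐ[μ.restrict τ] fun ζ => (starRingEnd ℂ) (θ₂ ζ) * ⇑h ζ) ∧
      (∀ h : Lp ℂ 2 μ,
        ⇑(J h).2 =ᵐ[μ] fun ζ =>
          τ.indicator (fun ζ' => (starRingEnd ℂ) (θ₁ ζ') * ⇑h ζ') ζ +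
          τᶜ.indicator (⇑h) ζ) ∧
      (∀ h : Lp ℂ 2 μ, ‖(J h).1‖ ^ 2 + ‖(J h).2‖ ^ 2 = ‖h‖ ^ 2) ∧
      (∀ h : Lp ℂ 2 μ, (J (UT h)).1 = Uτ' (J h).1 ∧ (J (UT h)).2 = UT (J h).2) ∧
      (∀ h : Lp ℂ 2 μ, ∀ p ∈ E₀,
        (⟪(J h).1, p.1⟫_ℂ + ⟪(J h).2, p.2⟫_ℂ : ℂ) = 0) ∧
      (∀ p : (Lp ℂ 2 (μ.restrict τ)) × (Lp ℂ 2 μ),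
        ∃ h : Lp ℂ 2 μ, ∃ q ∈ E₀, p = J h + q) := by
  -- measurability of θ₁ θ₂
  have hθ₁m : Measurable θ₁ := by
    have : θ₁ = fun ζ => g₁ ζ / (Real.sqrt (‖g₁ ζ‖ ^ 2 + ‖g₂ ζ‖ ^ 2) : ℂ) := funext hθ₁
    rw [this]; fun_prop
  have hθ₂m : Measurable θ₂ := by
    have : θ₂ = fun ζ => g₂ ζ / (Real.sqrt (‖g₁ ζ‖ ^ 2 + ‖g₂ ζ‖ ^ 2) : ℂ) := funext hθ₂
    rw [this]; fun_prop
  -- bounds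
  have hbd : ∀ (g : Ω → ℂ) (θ : Ω → ℂ), (∀ ζ, θ ζ = g ζ / (Real.sqrt (‖g₁ ζ‖ ^ 2 + ‖g₂ ζ‖ ^ 2) : ℂ)) →
      (∀ ζ, ‖g ζ‖ ^ 2 ≤ ‖g₁ ζ‖ ^ 2 + ‖g₂ ζ‖ ^ 2) → ∀ ζ, ‖θ ζ‖ ≤ 1 := by
    intro g θ hθ hle ζ
    rw [hθ ζ, norm_div]
    have h0 : (0:ℝ) ≤ ‖g₁ ζ‖ ^ 2 + ‖g₂ ζ‖ ^ 2 := by positivity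
    have hs := Real.sqrt_nonneg (‖g₁ ζ‖ ^ 2 + ‖g₂ ζ‖ ^ 2)
    have hn : ‖((Real.sqrt (‖g₁ ζ‖ ^ 2 + ‖g₂ ζ‖ ^ 2) : ℝ) : ℂ)‖ = Real.sqrt (‖g₁ ζ‖ ^ 2 + ‖g₂ ζ‖ ^ 2) := by
      rw [Complex.norm_real, Real.norm_of_nonneg hs]
    rw [hn]
    rcases eq_or_lt_of_le hs with h | h
    · rw [← h, div_zero]; exact zero_le_one
    · rw [div_le_one h]
      have : ‖g ζ‖ ^ 2 ≤ Real.sqrt (‖g₁ ζ‖ ^ 2 + ‖g₂ ζ‖ ^ 2) ^ 2 := by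
        rw [Real.sq_sqrt h0]; exact hle ζ
      nlinarith [norm_nonneg (g ζ)]
  have hbd₁ : ∀ ζ, ‖θ₁ ζ‖ ≤ 1 := hbd g₁ θ₁ hθ₁ (fun ζ => by nlinarith [norm_nonneg (g₂ ζ)])
  have hbd₂ : ∀ ζ, ‖θ₂ ζ‖ ≤ 1 := hbd g₂ θ₂ hθ₂ (fun ζ => by nlinarith [norm_nonneg (g₁ ζ)])
  -- unit length a.e.
  have hunitR : ∀ᵐ ζ ∂μ, ‖θ₁ ζ‖ ^ 2 + ‖θ₂ ζ‖ ^ 2 = 1 := by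
    filter_upwards [hpos] with ζ hζ
    have h0 : (0:ℝ) < ‖g₁ ζ‖ ^ 2 + ‖g₂ ζ‖ ^ 2 := by
      rcases hζ with h | h
      · have := norm_pos_iff.2 h; positivity
      · have := norm_pos_iff.2 h; positivity
    have hs : (0:ℝ) < Real.sqrt (‖g₁ ζ‖ ^ 2 + ‖g₂ ζ‖ ^ 2) := Real.sqrt_pos.2 h0
    have hn : ∀ g : Ω → ℂ, ‖g ζ / ((Real.sqrt (‖g₁ ζ‖ ^ 2 + ‖g₂ ζ‖ ^ 2) : ℝ) : ℂ)‖ ^ 2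
        = ‖g ζ‖ ^ 2 / (‖g₁ ζ‖ ^ 2 + ‖g₂ ζ‖ ^ 2) := by
      intro g
      rw [norm_div, Complex.norm_real, Real.norm_of_nonneg hs.le, div_pow, Real.sq_sqrt h0.le]
    rw [hθ₁ ζ, hθ₂ ζ, hn g₁, hn g₂, ← add_div, div_self h0.ne']
  have hunit : ∀ᵐ ζ ∂μ, θ₁ ζ * (starRingEnd ℂ) (θ₁ ζ) + θ₂ ζ * (starRingEnd ℂ) (θ₂ ζ) = 1 := by
    filter_upwards [hunitR] with ζ hζ
    rw [Complex.mul_conj, Complex.mul_conj, Complex.normSq_eq_norm_sq, Complex.normSq_eq_norm_sq,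
      ← Complex.ofReal_add, hζ, Complex.ofReal_one]
  -- support of θ₂
  have hθ₂supp : ∀ᵐ ζ ∂μ, ζ ∉ τ → θ₂ ζ = 0 := by
    filter_upwards [hg₂supp] with ζ h hζ
    rw [hθ₂ ζ, h hζ, zero_div]
  have hcθ₁m : Measurable fun ζ => (starRingEnd ℂ) (θ₁ ζ) := by simp only [starRingEnd_apply]; exact continuous_star.measurable.comp hθ₁m
  have hcθ₂m : Measurable fun ζ => (starRingEnd ℂ) (θ₂ ζ) := by simp only [starRingEnd_apply]; exact continuous_star.measurable.comp hθ₂m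
  -- MemLp facts for the two components of J
  have memJ1 : ∀ h : Lp ℂ 2 μ, MemLp (fun ζ => (starRingEnd ℂ) (θ₂ ζ) * ⇑h ζ) 2 (μ.restrict τ) := by
    intro h
    refine ((Lp.memLp h).restrict τ).of_le
      (hcθ₂m.aestronglyMeasurable.mul ((Lp.aestronglyMeasurable h).restrict))
      (Eventually.of_forall fun a => ?_)
    rw [norm_mul, RCLike.norm_conj]
    exact mul_le_of_le_one_left (norm_nonneg _) (hbd₂ a)
  have memJ2 : ∀ h : Lp ℂ 2 μ, MemLp (fun ζ =>
      τ.indicator (fun ζ' => (starRingEnd ℂ) (θ₁ ζ') * ⇑h ζ') ζ + τᶜ.indicator (⇑h) ζ) 2 μ := by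
    intro h
    refine (Lp.memLp h).of_le
      ((((hcθ₁m.aestronglyMeasurable).mul (Lp.aestronglyMeasurable h)).indicator hτ).add
        ((Lp.aestronglyMeasurable h).indicator hτ.compl))
      (Eventually.of_forall fun a => ?_)
    by_cases ha : a ∈ τ
    · rw [Set.indicator_of_mem ha, Set.indicator_of_notMem (by simpa using ha), add_zero,
        norm_mul, RCLike.norm_conj]
      exact mul_le_of_le_one_left (norm_nonneg _) (hbd₁ a)
    · rw [Set.indicator_of_notMem ha, Set.indicator_of_mem (by simpa using ha), zero_add]
  -- the map J₀
  set J₀ : Lp ℂ 2 μ → (Lp ℂ 2 (μ.restrict τ)) × (Lp ℂ 2 μ) :=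
    fun h => ((memJ1 h).toLp _, (memJ2 h).toLp _) with hJ₀def
  have hJ1 : ∀ h : Lp ℂ 2 μ, ⇑(J₀ h).1 =ᵐ[μ.restrict τ]
      fun ζ => (starRingEnd ℂ) (θ₂ ζ) * ⇑h ζ := fun h => (memJ1 h).coeFn_toLp
  have hJ2 : ∀ h : Lp ℂ 2 μ, ⇑(J₀ h).2 =ᵐ[μ] fun ζ =>
      τ.indicator (fun ζ' => (starRingEnd ℂ) (θ₁ ζ') * ⇑h ζ') ζ + τᶜ.indicator (⇑h) ζ :=
    fun h => (memJ2 h).coeFn_toLp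
  have hadd : ∀ h h' : Lp ℂ 2 μ, J₀ (h + h') = J₀ h + J₀ h' := by
    intro h h'
    refine Prod.ext (Lp.ext ?_) (Lp.ext ?_)
    · have e4 : ⇑(h + h') =ᵐ[μ.restrict τ] ⇑h + ⇑h' := ae_restrict_of_ae (Lp.coeFn_add h h')
      have e5 : ⇑((J₀ h + J₀ h').1) =ᵐ[μ.restrict τ] ⇑(J₀ h).1 + ⇑(J₀ h').1 :=
        Lp.coeFn_add _ _
      filter_upwards [hJ1 (h + h'), hJ1 h, hJ1 h', e4, e5] with a h1 h2 h3 h4 h5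
      simp only [Pi.add_apply] at *
      rw [h1, h4, h5, h2, h3]; ring
    · have e4 : ⇑(h + h') =ᵐ[μ] ⇑h + ⇑h' := Lp.coeFn_add h h'
      have e5 : ⇑((J₀ h + J₀ h').2) =ᵐ[μ] ⇑(J₀ h).2 + ⇑(J₀ h').2 := Lp.coeFn_add _ _
      filter_upwards [hJ2 (h + h'), hJ2 h, hJ2 h', e4, e5] with a h1 h2 h3 h4 h5
      simp only [Pi.add_apply] at *
      rw [h1, h5, h2, h3]
      by_cases ha : a ∈ τ
      · simp only [Set.indicator_of_mem ha, Set.indicator_of_notMem (Set.notMem_compl_iff.2 ha), h4,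
          add_zero]
        ring
      · simp only [Set.indicator_of_notMem ha, Set.indicator_of_mem (by simpa using ha : a ∈ τᶜ),
          h4, zero_add]
  have hsmul : ∀ (c : ℂ) (h : Lp ℂ 2 μ), J₀ (c • h) = c • J₀ h := by
    intro c h
    refine Prod.ext (Lp.ext ?_) (Lp.ext ?_)
    · have e4 : ⇑(c • h) =ᵐ[μ.restrict τ] c • ⇑h := ae_restrict_of_ae (Lp.coeFn_smul c h)
      have e5 : ⇑((c • J₀ h).1) =ᵐ[μ.restrict τ] c • ⇑(J₀ h).1 := Lp.coeFn_smul _ _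
      filter_upwards [hJ1 (c • h), hJ1 h, e4, e5] with a h1 h2 h4 h5
      simp only [Pi.smul_apply, smul_eq_mul] at *
      rw [h1, h4, h5, h2]; ring
    · have e4 : ⇑(c • h) =ᵐ[μ] c • ⇑h := Lp.coeFn_smul c h
      have e5 : ⇑((c • J₀ h).2) =ᵐ[μ] c • ⇑(J₀ h).2 := Lp.coeFn_smul _ _
      filter_upwards [hJ2 (c • h), hJ2 h, e4, e5] with a h1 h2 h4 h5
      simp only [Pi.smul_apply, smul_eq_mul] at *
      rw [h1, h5, h2]
      by_cases ha : a ∈ τ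
      · simp only [Set.indicator_of_mem ha, Set.indicator_of_notMem (Set.notMem_compl_iff.2 ha), h4,
          add_zero]
        ring
      · simp only [Set.indicator_of_notMem ha, Set.indicator_of_mem (by simpa using ha : a ∈ τᶜ),
          h4, zero_add]
  have asmsq : ∀ F : Ω → ℂ, ∀ ν : Measure Ω, AEStronglyMeasurable F ν →
      AEStronglyMeasurable (fun a => ‖F a‖ ^ 2) ν := by
    intro F ν hF
    exact hF.norm.pow 2
  refine ⟨{ toFun := J₀, map_add' := hadd, map_smul' := hsmul }, hJ1, hJ2, ?_, ?_, ?_, ?_⟩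
  · -- norm identity
    intro h
    simp only [LinearMap.coe_mk, AddHom.coe_mk]
    have intH : Integrable (fun a => ‖(⇑h) a‖ ^ 2) μ := by
      refine ((L2.integrable_inner (𝕜 := ℂ) h h).re).congr
        (Eventually.of_forall fun a => ?_)
      exact inner_self_eq_norm_sq (h a)
    have intA : Integrable (τ.indicator fun a => ‖(starRingEnd ℂ) (θ₂ a) * ⇑h a‖ ^ 2) μ := by
      refine Integrable.mono' intH
        ((asmsq _ μ (hcθ₂m.aestronglyMeasurable.mul (Lp.aestronglyMeasurable h))).indicator hτ)
        (Eventually.of_forall fun a => ?_)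
      by_cases ha : a ∈ τ
      · rw [Set.indicator_of_mem ha, Real.norm_of_nonneg (by positivity), norm_mul,
          RCLike.norm_conj]
        exact pow_le_pow_left₀ (by positivity)
          (mul_le_of_le_one_left (norm_nonneg _) (hbd₂ a)) 2
      · rw [Set.indicator_of_notMem ha, norm_zero]; positivity
    have intB : Integrable (fun a => ‖τ.indicator (fun ζ' => (starRingEnd ℂ) (θ₁ ζ') * ⇑h ζ') a
        + τᶜ.indicator (⇑h) a‖ ^ 2) μ := by
      refine Integrable.mono' intH
        (asmsq _ μ (((hcθ₁m.aestronglyMeasurable.mul (Lp.aestronglyMeasurable h)).indicator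
          hτ).add ((Lp.aestronglyMeasurable h).indicator hτ.compl)))
        (Eventually.of_forall fun a => ?_)
      rw [Real.norm_of_nonneg (by positivity)]
      by_cases ha : a ∈ τ
      · rw [Set.indicator_of_mem ha, Set.indicator_of_notMem (Set.notMem_compl_iff.2 ha),
          add_zero, norm_mul, RCLike.norm_conj]
        exact pow_le_pow_left₀ (by positivity)
          (mul_le_of_le_one_left (norm_nonneg _) (hbd₁ a)) 2
      · rw [Set.indicator_of_notMem ha, Set.indicator_of_mem (by simpa using ha : a ∈ τᶜ),
          zero_add]
    have eq1 : ‖(J₀ h).1‖ ^ 2 = ∫ a, τ.indicator (fun a => ‖(starRingEnd ℂ) (θ₂ a) * ⇑h a‖ ^ 2) a ∂μ := by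
      rw [l2_norm_sq', integral_indicator hτ]
      refine integral_congr_ae ?_
      filter_upwards [hJ1 h] with a ha
      simp only [ha]
    have eq2 : ‖(J₀ h).2‖ ^ 2 = ∫ a, ‖τ.indicator (fun ζ' => (starRingEnd ℂ) (θ₁ ζ') * ⇑h ζ') a
        + τᶜ.indicator (⇑h) a‖ ^ 2 ∂μ := by
      rw [l2_norm_sq']
      refine integral_congr_ae ?_
      filter_upwards [hJ2 h] with a ha
      simp only [ha]
    rw [eq1, eq2, ← integral_add intA intB, l2_norm_sq' μ h]
    refine integral_congr_ae ?_
    filter_upwards [hunitR] with a hau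
    by_cases ha : a ∈ τ
    · rw [Set.indicator_of_mem ha, Set.indicator_of_mem ha,
        Set.indicator_of_notMem (Set.notMem_compl_iff.2 ha), add_zero, norm_mul, norm_mul,
        RCLike.norm_conj, RCLike.norm_conj, mul_pow, mul_pow]
      nlinarith [norm_nonneg (⇑h a)]
    · simp only [Set.indicator_of_notMem ha,
        Set.indicator_of_mem (by simpa using ha : a ∈ τᶜ), zero_add]
  · -- intertwining
    intro h
    simp only [LinearMap.coe_mk, AddHom.coe_mk]
    constructor
    · refine Lp.ext ?_
      filter_upwards [hJ1 (UT h), ae_restrict_of_ae (hUT h), hUτ' ((J₀ h).1), hJ1 h]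
        with a e1 e2 e3 e4
      rw [e1, e2, e3, e4]; ring
    · refine Lp.ext ?_
      filter_upwards [hJ2 (UT h), hUT h, hUT ((J₀ h).2), hJ2 h] with a e1 e2 e3 e4
      rw [e1, e3, e4]
      by_cases ha : a ∈ τ
      · simp only [Set.indicator_of_mem ha,
          Set.indicator_of_notMem (Set.notMem_compl_iff.2 ha), add_zero, e2]
        ring
      · simp only [Set.indicator_of_notMem ha,
          Set.indicator_of_mem (by simpa using ha : a ∈ τᶜ), zero_add, e2]
  · -- orthogonality to E₀
    intro h p hp
    simp only [LinearMap.coe_mk, AddHom.coe_mk]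
    rw [hE₀] at hp
    obtain ⟨w, hw, hp1, hp2⟩ := hp
    have i1 : Integrable (fun a => ⟪(⇑(J₀ h).1) a, (⇑p.1) a⟫_ℂ) (μ.restrict τ) :=
      L2.integrable_inner _ _
    have i1' : Integrable (fun a => (starRingEnd ℂ) ((starRingEnd ℂ) (θ₂ a) * ⇑h a)
        * (θ₁ a * w a)) (μ.restrict τ) := by
      refine i1.congr ?_
      filter_upwards [hJ1 h, hp1] with a e1 e2
      rw [RCLike.inner_apply, e1, e2]; ring
    have iInd : Integrable (τ.indicator fun a => (starRingEnd ℂ) ((starRingEnd ℂ) (θ₂ a) * ⇑h a)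
        * (θ₁ a * w a)) μ := (integrable_indicator_iff hτ).2 i1'
    have i2 : Integrable (fun a => ⟪(⇑(J₀ h).2) a, (⇑p.2) a⟫_ℂ) μ := L2.integrable_inner _ _
    have e1 : (⟪(J₀ h).1, p.1⟫_ℂ : ℂ) = ∫ a, τ.indicator (fun a =>
        (starRingEnd ℂ) ((starRingEnd ℂ) (θ₂ a) * ⇑h a) * (θ₁ a * w a)) a ∂μ := by
      rw [MeasureTheory.L2.inner_def, integral_indicator hτ]
      refine integral_congr_ae ?_
      filter_upwards [hJ1 h, hp1] with a f1 f2
      rw [RCLike.inner_apply, f1, f2]; ring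
    rw [e1, MeasureTheory.L2.inner_def, ← integral_add iInd i2]
    refine integral_eq_zero_of_ae ?_
    filter_upwards [hJ2 h, hp2] with a f1 f2
    rw [RCLike.inner_apply, f1, f2]
    by_cases ha : a ∈ τ
    · simp only [Set.indicator_of_mem ha, Set.indicator_of_notMem (Set.notMem_compl_iff.2 ha),
        add_zero, map_mul, Complex.conj_conj, Pi.zero_apply]
      ring
    · simp only [Set.indicator_of_notMem ha, Pi.zero_apply, mul_zero, zero_mul, add_zero, zero_add]
  · -- decomposition
    intro p
    simp only [LinearMap.coe_mk, AddHom.coe_mk]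
    have mp1 : MemLp (⇑p.1) 2 (μ.restrict τ) := Lp.memLp p.1
    have mp2r : MemLp (⇑p.2) 2 (μ.restrict τ) := (Lp.memLp p.2).restrict τ
    have mf : MemLp (fun ζ => θ₂ ζ * ⇑p.1 ζ + θ₁ ζ * ⇑p.2 ζ) 2 (μ.restrict τ) := by
      refine MemLp.add ?_ ?_
      · refine mp1.of_le (hθ₂m.aestronglyMeasurable.mul mp1.aestronglyMeasurable)
          (Eventually.of_forall fun a => ?_)
        rw [norm_mul]
        exact mul_le_of_le_one_left (norm_nonneg _) (hbd₂ a)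
      · refine mp2r.of_le (hθ₁m.aestronglyMeasurable.mul mp2r.aestronglyMeasurable)
          (Eventually.of_forall fun a => ?_)
        rw [norm_mul]
        exact mul_le_of_le_one_left (norm_nonneg _) (hbd₁ a)
    have mh₀ : MemLp (fun ζ => τ.indicator (fun ζ' => θ₂ ζ' * ⇑p.1 ζ' + θ₁ ζ' * ⇑p.2 ζ') ζ
        + τᶜ.indicator (⇑p.2) ζ) 2 μ :=
      ((memLp_indicator_iff_restrict hτ).2 mf).add ((Lp.memLp p.2).indicator hτ.compl)
    have mw : MemLp (fun ζ => (starRingEnd ℂ) (θ₁ ζ) * ⇑p.1 ζ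
        - (starRingEnd ℂ) (θ₂ ζ) * ⇑p.2 ζ) 2 (μ.restrict τ) := by
      refine MemLp.sub ?_ ?_
      · refine mp1.of_le (hcθ₁m.aestronglyMeasurable.mul mp1.aestronglyMeasurable)
          (Eventually.of_forall fun a => ?_)
        rw [norm_mul, RCLike.norm_conj]
        exact mul_le_of_le_one_left (norm_nonneg _) (hbd₁ a)
      · refine mp2r.of_le (hcθ₂m.aestronglyMeasurable.mul mp2r.aestronglyMeasurable)
          (Eventually.of_forall fun a => ?_)
        rw [norm_mul, RCLike.norm_conj]
        exact mul_le_of_le_one_left (norm_nonneg _) (hbd₂ a)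
    have mq1 : MemLp (fun ζ => θ₁ ζ * ((starRingEnd ℂ) (θ₁ ζ) * ⇑p.1 ζ
        - (starRingEnd ℂ) (θ₂ ζ) * ⇑p.2 ζ)) 2 (μ.restrict τ) := by
      refine mw.of_le (hθ₁m.aestronglyMeasurable.mul mw.aestronglyMeasurable)
        (Eventually.of_forall fun a => ?_)
      rw [norm_mul]
      exact mul_le_of_le_one_left (norm_nonneg _) (hbd₁ a)
    have mq2 : MemLp (τ.indicator fun ζ => -(θ₂ ζ) * ((starRingEnd ℂ) (θ₁ ζ) * ⇑p.1 ζ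
        - (starRingEnd ℂ) (θ₂ ζ) * ⇑p.2 ζ)) 2 μ := by
      refine (memLp_indicator_iff_restrict hτ).2 ?_
      refine mw.of_le ((hθ₂m.neg.aestronglyMeasurable).mul mw.aestronglyMeasurable)
        (Eventually.of_forall fun a => ?_)
      rw [norm_mul, norm_neg]
      exact mul_le_of_le_one_left (norm_nonneg _) (hbd₂ a)
    refine ⟨mh₀.toLp _, (mq1.toLp _, mq2.toLp _), ?_, ?_⟩
    · rw [hE₀]
      exact ⟨_, mw, mq1.coeFn_toLp, mq2.coeFn_toLp⟩
    · have hh : ⇑(mh₀.toLp _) =ᵐ[μ] fun ζ =>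
          τ.indicator (fun ζ' => θ₂ ζ' * ⇑p.1 ζ' + θ₁ ζ' * ⇑p.2 ζ') ζ + τᶜ.indicator (⇑p.2) ζ :=
        mh₀.coeFn_toLp
      refine Prod.ext (Lp.ext ?_) (Lp.ext ?_)
      · have cadd : ⇑((J₀ (mh₀.toLp _) + (mq1.toLp _, mq2.toLp _)).1) =ᵐ[μ.restrict τ]
            ⇑(J₀ (mh₀.toLp _)).1 + ⇑(mq1.toLp _) := Lp.coeFn_add _ _
        filter_upwards [cadd, hJ1 (mh₀.toLp _), mq1.coeFn_toLp, ae_restrict_of_ae hh,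
          ae_restrict_of_ae hunit, ae_restrict_mem hτ] with a c1 c2 c3 c4 c5 c6
        rw [Pi.add_apply] at c1
        rw [c1, c2, c3, c4, Set.indicator_of_mem c6,
          Set.indicator_of_notMem (Set.notMem_compl_iff.2 c6), add_zero]
        linear_combination (- ⇑p.1 a) * c5
      · have cadd : ⇑((J₀ (mh₀.toLp _) + (mq1.toLp _, mq2.toLp _)).2) =ᵐ[μ]
            ⇑(J₀ (mh₀.toLp _)).2 + ⇑(mq2.toLp _) := Lp.coeFn_add _ _
        filter_upwards [cadd, hJ2 (mh₀.toLp _), mq2.coeFn_toLp, hh, hunit] with a c1 c2 c3 c4 c5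
        rw [Pi.add_apply] at c1
        rw [c1, c2, c3]
        by_cases ha : a ∈ τ
        · rw [Set.indicator_of_mem ha, Set.indicator_of_mem ha,
            Set.indicator_of_notMem (Set.notMem_compl_iff.2 ha), add_zero, c4,
            Set.indicator_of_mem ha, Set.indicator_of_notMem (Set.notMem_compl_iff.2 ha),
            add_zero]
          linear_combination (- ⇑p.2 a) * c5
        · rw [Set.indicator_of_notMem ha, Set.indicator_of_notMem ha,
            Set.indicator_of_mem (by simpa using ha : a ∈ τᶜ), zero_add, add_zero, c4,
            Set.indicator_of_notMem ha, Set.indicator_of_mem (by simpa using ha : a ∈ τᶜ),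
            zero_add]
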